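/- Let h_SB, h_CB, h_CD, p_S, σ_B², σ_D², P_C > 0. Define R_B(α) = log₂(1 + α·P_C·h_CB/(p_S·h_SB + (1−α)·P_C·h_CB + σ_B²)) and R_{CD,S}(α) = log₂(1 + (1−α)·P_C·h_CD/σ_D²) for α ∈ [0,1]. Then R_B is continuous and strictly increasing on [0,1], R_{CD,S} is continuous and strictly decreasing on [0,1], R_B(0) − R_{CD,S}(0) < 0 and R_B(1) − R_{CD,S}(1) > 0; hence there exists a unique ᾰ ∈ (0,1) with R_B(ᾰ) = R_{CD,S}(ᾰ), and min(R_B(α), R_{CD,S}(α)) over α ∈ [0,1] is maximized at α = ᾰ, with maximum value R_B(ᾰ) = R_{CD,S}(ᾰ). -/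

import Mathlib

open Set Real

/-- solution of the max–min rate problem when the relay transmits at
maximum power `P_C`: there is a unique crossing `ᾰ ∈ (0,1)` of `R_B` and
`R_{CD,S}`, and it maximizes `min(R_B, R_{CD,S})` over `[0,1]`. -/
theorem maxmin_rate_full_power
    (hSB hCB hCD pS σB2 σD2 PC : ℝ)
    (hhSB : 0 < hSB) (hhCB : 0 < hCB) (hhCD : 0 < hCD)
    (hpS : 0 < pS) (hσB : 0 < σB2) (hσD : 0 < σD2) (hPC : 0 < PC) :
    let RB : ℝ → ℝ := fun α =>
      logb 2 (1 + α * PC * hCB / (pS * hSB + (1 - α) * PC * hCB + σB2))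
    let RCDS : ℝ → ℝ := fun α => logb 2 (1 + (1 - α) * PC * hCD / σD2)
    ContinuousOn RB (Icc 0 1) ∧ StrictMonoOn RB (Icc 0 1) ∧
    ContinuousOn RCDS (Icc 0 1) ∧ StrictAntiOn RCDS (Icc 0 1) ∧
    RB 0 - RCDS 0 < 0 ∧ 0 < RB 1 - RCDS 1 ∧
    ∃ α₀ ∈ Ioo (0 : ℝ) 1, RB α₀ = RCDS α₀ ∧
      (∀ α' ∈ Ioo (0 : ℝ) 1, RB α' = RCDS α' → α' = α₀) ∧
      (∀ α ∈ Icc (0 : ℝ) 1, min (RB α) (RCDS α) ≤ min (RB α₀) (RCDS α₀)) ∧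
      min (RB α₀) (RCDS α₀) = RB α₀ ∧ min (RB α₀) (RCDS α₀) = RCDS α₀ := by
  intro RB RCDS
  have h2 : (1:ℝ) < 2 := one_lt_two
  have hD : ∀ α ∈ Icc (0:ℝ) 1, 0 < pS * hSB + (1 - α) * PC * hCB + σB2 := by
    intro α hα
    have h1 : 0 ≤ (1 - α) * PC * hCB :=
      mul_nonneg (mul_nonneg (by linarith [hα.2]) hPC.le) hhCB.le
    nlinarith [mul_pos hpS hhSB]
  have hC : 0 < pS * hSB + PC * hCB + σB2 := by positivity
  have hkey : ∀ α ∈ Icc (0:ℝ) 1,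
      1 + α * PC * hCB / (pS * hSB + (1 - α) * PC * hCB + σB2)
        = (pS * hSB + PC * hCB + σB2) / (pS * hSB + (1 - α) * PC * hCB + σB2) := by
    intro α hα
    have h := (hD α hα).ne'
    rw [eq_div_iff h, add_mul, div_mul_cancel₀ _ h]
    ring
  have hinnerpos : ∀ α ∈ Icc (0:ℝ) 1,
      0 < 1 + α * PC * hCB / (pS * hSB + (1 - α) * PC * hCB + σB2) := by
    intro α hα
    have h1 : 0 ≤ α * PC * hCB / (pS * hSB + (1 - α) * PC * hCB + σB2) :=
      div_nonneg (mul_nonneg (mul_nonneg hα.1 hPC.le) hhCB.le) (hD α hα).le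
    linarith
  -- continuity of RB
  have hRBc : ContinuousOn RB (Icc 0 1) := by
    have hin : ContinuousOn
        (fun α : ℝ => 1 + α * PC * hCB / (pS * hSB + (1 - α) * PC * hCB + σB2))
        (Icc 0 1) := by
      apply continuousOn_const.add
      exact ContinuousOn.div (by fun_prop) (by fun_prop) fun α hα => (hD α hα).ne'
    exact (Real.continuousOn_logb.comp hin fun α hα =>
      (hinnerpos α hα).ne' : ContinuousOn _ _)
  -- monotonicity of RB
  have hRBmono : StrictMonoOn RB (Icc 0 1) := by
    intro x hx y hy hxy
    show logb 2 _ < logb 2 _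
    rw [hkey x hx, hkey y hy]
    refine logb_lt_logb h2 (div_pos hC (hD x hx)) ?_
    apply div_lt_div_of_pos_left hC (hD y hy)
    nlinarith [mul_pos hPC hhCB]
  -- continuity of RCDS
  have hRCc : ContinuousOn RCDS (Icc 0 1) := by
    have hin : ContinuousOn (fun α : ℝ => 1 + (1 - α) * PC * hCD / σD2) (Icc 0 1) := by
      fun_prop
    refine Real.continuousOn_logb.comp hin fun α hα => ?_
    have h1 : 0 ≤ (1 - α) * PC * hCD / σD2 :=
      div_nonneg (mul_nonneg (mul_nonneg (by linarith [hα.2]) hPC.le) hhCD.le) hσD.le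
    have : (0:ℝ) < 1 + (1 - α) * PC * hCD / σD2 := by linarith
    exact this.ne'
  -- antitonicity of RCDS
  have hRCanti : StrictAntiOn RCDS (Icc 0 1) := by
    intro x hx y hy hxy
    show logb 2 _ < logb 2 _
    have h1 : 0 ≤ (1 - y) * PC * hCD / σD2 :=
      div_nonneg (mul_nonneg (mul_nonneg (by linarith [hy.2]) hPC.le) hhCD.le) hσD.le
    refine logb_lt_logb h2 (by linarith) ?_
    have h3 : (1 - y) * PC * hCD < (1 - x) * PC * hCD := by
      nlinarith [mul_pos hPC hhCD]
    have := (div_lt_div_iff_of_pos_right hσD).mpr h3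
    linarith
  -- endpoint values
  have hRB0 : RB 0 = 0 := by
    show logb 2 _ = 0
    norm_num
  have hRC1 : RCDS 1 = 0 := by
    show logb 2 _ = 0
    norm_num
  have hRC0 : 0 < RCDS 0 := by
    show 0 < logb 2 _
    refine logb_pos h2 ?_
    have : 0 < (1 - (0:ℝ)) * PC * hCD / σD2 := by norm_num; positivity
    linarith
  have hRB1 : 0 < RB 1 := by
    show 0 < logb 2 _
    refine logb_pos h2 ?_
    have : 0 < 1 * PC * hCB / (pS * hSB + (1 - (1:ℝ)) * PC * hCB + σB2) := by
      norm_num; positivity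
    linarith
  have hleft : RB 0 - RCDS 0 < 0 := by linarith
  have hright : 0 < RB 1 - RCDS 1 := by linarith
  refine ⟨hRBc, hRBmono, hRCc, hRCanti, hleft, hright, ?_⟩
  -- the difference function
  set g : ℝ → ℝ := fun α => RB α - RCDS α with hg
  have hgc : ContinuousOn g (Icc 0 1) := hRBc.sub hRCc
  have hgmono : StrictMonoOn g (Icc 0 1) := by
    intro x hx y hy hxy
    have h1 := hRBmono hx hy hxy
    have h2 := hRCanti hx hy hxy
    simp only [hg]
    linarith
  have hivt := intermediate_value_Icc (by norm_num : (0:ℝ) ≤ 1) hgc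
  have h0mem : (0:ℝ) ∈ Icc (g 0) (g 1) := ⟨by simp only [hg]; linarith, by simp only [hg]; linarith⟩
  obtain ⟨α₀, hα₀Icc, hgα₀⟩ := hivt h0mem
  have hα₀ne0 : α₀ ≠ 0 := by
    intro h; rw [h] at hgα₀
    simp only [hg] at hgα₀; linarith
  have hα₀ne1 : α₀ ≠ 1 := by
    intro h; rw [h] at hgα₀
    simp only [hg] at hgα₀; linarith
  have hα₀Ioo : α₀ ∈ Ioo (0:ℝ) 1 :=
    ⟨lt_of_le_of_ne hα₀Icc.1 (Ne.symm hα₀ne0), lt_of_le_of_ne hα₀Icc.2 hα₀ne1⟩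
  have heq : RB α₀ = RCDS α₀ := by
    have : RB α₀ - RCDS α₀ = 0 := hgα₀
    linarith
  have hminB : min (RB α₀) (RCDS α₀) = RB α₀ := by
    rw [heq, min_self]
  have hminC : min (RB α₀) (RCDS α₀) = RCDS α₀ := by
    rw [heq, min_self]
  refine ⟨α₀, hα₀Ioo, heq, ?_, ?_, hminB, hminC⟩
  · intro α' hα' heq'
    have h1 : g α' = 0 := by simp only [hg]; linarith [heq']
    exact hgmono.injOn (Ioo_subset_Icc_self hα') hα₀Icc (by rw [h1, hgα₀])
  · intro α hα
    rcases le_total α α₀ with h | h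
    · calc min (RB α) (RCDS α) ≤ RB α := min_le_left _ _
        _ ≤ RB α₀ := hRBmono.monotoneOn hα hα₀Icc h
        _ = min (RB α₀) (RCDS α₀) := hminB.symm
    · calc min (RB α) (RCDS α) ≤ RCDS α := min_le_right _ _
        _ ≤ RCDS α₀ := hRCanti.antitoneOn hα₀Icc hα h
        _ = min (RB α₀) (RCDS α₀) := hminC.symm
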